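/- Let q = 2^ℓ, let s and t divide q−1, and let G_s = {x ∈ F_q* : x^s = 1}, G_t = {x ∈ F_q* : x^t = 1}. Suppose P(X,Y) = X^{a₁}Y^{b₁} + X^{a₂}Y^{b₂} where neither monomial is good, a₁ ≡ a₂ (mod s), and a₁ + b₁ ≡ a₂ + b₂ (mod t). Then for every line L(T) = (T, αT + β) with α ∈ G_s and β ∈ G_t, the restriction P|_L has degree strictly less than q − 1. -/

import Mathlib

open Polynomial

/-- `Shadow2 n m` : every bit set in `n` is also set in `m` (i.e. `n ≤₂ m`). -/
def Shadow2 (n m : ℕ) : Prop := ∀ i, n.testBit i = true → m.testBit i = true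

lemma shadow2_le {n m : ℕ} (h : Shadow2 n m) : n ≤ m := by
  have hand : n &&& m = n := Nat.eq_of_testBit_eq fun i => by
    rw [Nat.testBit_and]
    cases hb : n.testBit i
    · simp
    · simp [h i hb]
  calc n = n &&& m := hand.symm
    _ ≤ m := Nat.and_le_right

/-- Lucas' theorem for `p = 2`: if every bit of `n` is a bit of `m`,
then `choose m n` is odd. -/
lemma lucas_two : ∀ m n : ℕ, Shadow2 n m → Nat.choose m n % 2 = 1 := by
  intro m
  induction m using Nat.strong_induction_on with
  | _ m ih =>
    intro n hnm
    rcases Nat.eq_zero_or_pos m with rfl | hm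
    · have hn : n = 0 := Nat.eq_of_testBit_eq fun i => by
        rw [Nat.zero_testBit]
        cases hb : n.testBit i
        · rfl
        · exact absurd (hnm i hb) (by simp [Nat.zero_testBit])
      subst hn; rfl
    · have key : Nat.choose m n ≡
          Nat.choose (m % 2) (n % 2) * Nat.choose (m / 2) (n / 2) [MOD 2] :=
        Choose.choose_modEq_choose_mod_mul_choose_div_nat (p := 2)
      have h1 : Nat.choose (m % 2) (n % 2) = 1 := by
        rcases Nat.mod_two_eq_zero_or_one n with h | h
        · rw [h, Nat.choose_zero_right]
        · have hb : n.testBit 0 = true := by simp [Nat.testBit_zero, h]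
          have hmb := hnm 0 hb
          rw [Nat.testBit_zero, decide_eq_true_eq] at hmb
          rw [h, hmb]
          rfl
      have h2 : Nat.choose (m / 2) (n / 2) % 2 = 1 := by
        apply ih (m / 2) (by omega)
        intro i hi
        rw [Nat.testBit_div_two] at hi ⊢
        exact hnm (i + 1) hi
      have key' : Nat.choose m n % 2 =
          (Nat.choose (m % 2) (n % 2) * Nat.choose (m / 2) (n / 2)) % 2 := key
      rw [key', h1, one_mul]
      exact h2

/-- The sum of `x ^ i` over a finite field. -/
lemma sum_pow_eq (F : Type*) [Field F] [Fintype F] (i : ℕ) :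
    ∑ x : F, x ^ i =
      if i ≠ 0 ∧ (Fintype.card F - 1) ∣ i then (-1 : F) else 0 := by
  classical
  by_cases hi : i = 0
  · subst hi
    simp [Finset.card_univ, FiniteField.cast_card_eq_zero]
  · have h0 : (0 : F) ^ i = 0 := zero_pow hi
    rw [← Finset.sum_erase_add _ _ (Finset.mem_univ (0 : F)), h0, add_zero]
    have hmap : ∑ x ∈ Finset.univ.erase (0 : F), x ^ i = ∑ x : Fˣ, (x : F) ^ i := by
      rw [Finset.erase_eq]
      let φ : Fˣ ↪ F := ⟨fun x ↦ x, fun _ _ h => Units.ext h⟩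
      have huniv : Finset.univ.map φ = Finset.univ \ {0} := by
        ext x
        simp only [Finset.mem_map, Finset.mem_univ, Function.Embedding.coeFn_mk, true_and,
          Finset.mem_sdiff, Finset.mem_singleton, φ]
        exact isUnit_iff_ne_zero
      rw [← huniv, Finset.sum_map]
      rfl
    rw [hmap, FiniteField.sum_pow_units F i]
    simp [hi]

/-- Summing the values of a polynomial of small degree over a finite field
picks out (minus) its coefficient in degree `q - 1`. -/
lemma sum_eval (F : Type*) [Field F] [Fintype F] (q : ℕ) (hq : Fintype.card F = q)
    (h2 : 2 ≤ q) {f : F[X]} (hdeg : f.natDegree < q) :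
    ∑ x : F, f.eval x = -f.coeff (q - 1) := by
  classical
  calc ∑ x : F, f.eval x
      = ∑ x : F, ∑ i ∈ Finset.range q, f.coeff i * x ^ i :=
        Finset.sum_congr rfl fun x _ => eval_eq_sum_range' hdeg x
    _ = ∑ i ∈ Finset.range q, f.coeff i * ∑ x : F, x ^ i := by
        rw [Finset.sum_comm]
        simp [Finset.mul_sum]
    _ = f.coeff (q - 1) * ∑ x : F, x ^ (q - 1) := by
        apply Finset.sum_eq_single (q - 1)
        · intro i hi hne
          have hi' : i < q := Finset.mem_range.mp hi
          have : ∑ x : F, x ^ i = 0 := by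
            rw [sum_pow_eq, if_neg]
            rintro ⟨h0, k, hk⟩
            have hk2 : k < 2 := by
              by_contra hk2
              push_neg at hk2
              have : (q - 1) * 2 ≤ (q - 1) * k := Nat.mul_le_mul_left _ hk2
              rw [hq] at hk
              omega
            interval_cases k <;> rw [hq] at hk <;> omega
          rw [this, mul_zero]
        · intro h
          exact absurd (Finset.mem_range.mpr (by omega)) h
    _ = -f.coeff (q - 1) := by
        rw [sum_pow_eq, hq, if_pos ⟨by omega, dvd_refl _⟩, mul_neg_one]

/-- The key sum over a line for a single non-good monomial. -/
lemma sum_line {F : Type*} [Field F] [Fintype F] [CharP F 2] {q a b : ℕ}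
    (hq : Fintype.card F = q) (h2 : 2 ≤ q) (ha : a ≤ q - 1) (hb : b ≤ q - 1)
    (hab : a + b < 2 * (q - 1)) (hng : Shadow2 (q - 1 - a) b) (α β : F) :
    ∑ x : F, x ^ a * (α * x + β) ^ b = α ^ (q - 1 - a) * β ^ (a + b - (q - 1)) := by
  classical
  have hj0b : q - 1 - a ≤ b := shadow2_le hng
  have hstep : ∀ x : F, x ^ a * (α * x + β) ^ b
      = ∑ j ∈ Finset.range (b + 1),
          (α ^ j * β ^ (b - j) * (Nat.choose b j : F)) * x ^ (a + j) := by
    intro x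
    rw [add_pow, Finset.mul_sum]
    refine Finset.sum_congr rfl fun j hj => ?_
    rw [mul_pow, pow_add]
    ring
  calc ∑ x : F, x ^ a * (α * x + β) ^ b
      = ∑ j ∈ Finset.range (b + 1),
          (α ^ j * β ^ (b - j) * (Nat.choose b j : F)) * ∑ x : F, x ^ (a + j) := by
        simp_rw [hstep]
        rw [Finset.sum_comm]
        simp [Finset.mul_sum]
    _ = (α ^ (q - 1 - a) * β ^ (b - (q - 1 - a)) * (Nat.choose b (q - 1 - a) : F)) *
          ∑ x : F, x ^ (a + (q - 1 - a)) := by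
        apply Finset.sum_eq_single (q - 1 - a)
        · intro j hj hne
          have hjb : j ≤ b := Nat.lt_succ_iff.mp (Finset.mem_range.mp hj)
          have hzero : ∑ x : F, x ^ (a + j) = 0 := by
            rw [sum_pow_eq, if_neg]
            rintro ⟨h0, k, hk⟩
            have hk2 : k < 2 := by
              by_contra hk2
              push_neg at hk2
              have : (q - 1) * 2 ≤ (q - 1) * k := Nat.mul_le_mul_left _ hk2
              rw [hq] at hk
              omega
            interval_cases k <;> rw [hq] at hk <;> omega
          rw [hzero, mul_zero]
        · intro h
          exact absurd (Finset.mem_range.mpr (by omega)) h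
    _ = α ^ (q - 1 - a) * β ^ (a + b - (q - 1)) := by
        have hC : ((Nat.choose b (q - 1 - a) : ℕ) : F) = 1 := by
          have hodd := lucas_two b (q - 1 - a) hng
          have hrep : Nat.choose b (q - 1 - a)
              = 2 * (Nat.choose b (q - 1 - a) / 2) + 1 := by omega
          rw [hrep]
          push_cast
          rw [CharTwo.two_eq_zero, zero_mul, zero_add]
        have hexp : a + (q - 1 - a) = q - 1 := by omega
        have hsum : ∑ x : F, x ^ (a + (q - 1 - a)) = -1 := by
          rw [hexp, sum_pow_eq, hq, if_pos ⟨by omega, dvd_refl _⟩]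
        have hbe : b - (q - 1 - a) = a + b - (q - 1) := by omega
        rw [hsum, hC, mul_one, mul_neg_one, CharTwo.neg_eq, hbe]

/-- If neither monomial of `X^{a₁}Y^{b₁} + X^{a₂}Y^{b₂}` is good,
`a₁ ≡ a₂ (mod s)` and `a₁ + b₁ ≡ a₂ + b₂ (mod t)`, then for every line
`L(T) = (T, αT + β)` with `α ∈ G_s` and `β ∈ G_t` the restriction of the
binomial to `L` has degree strictly less than `q - 1`. -/
theorem binomial_restricts_nicely (ℓ : ℕ) (F : Type*) [Field F] [Fintype F]
    (hF : Fintype.card F = 2 ^ ℓ) (q : ℕ) (hq : q = 2 ^ ℓ)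
    (s t : ℕ) (hs : s ∣ q - 1) (ht : t ∣ q - 1)
    (a₁ b₁ a₂ b₂ : ℕ)
    (ha₁ : a₁ ≤ q - 1) (hb₁ : b₁ ≤ q - 1) (hab₁ : a₁ + b₁ < 2 * (q - 1))
    (ha₂ : a₂ ≤ q - 1) (hb₂ : b₂ ≤ q - 1) (hab₂ : a₂ + b₂ < 2 * (q - 1))
    (hng₁ : Shadow2 (q - 1 - a₁) b₁) (hng₂ : Shadow2 (q - 1 - a₂) b₂)
    (hmod₁ : a₁ ≡ a₂ [MOD s]) (hmod₂ : a₁ + b₁ ≡ a₂ + b₂ [MOD t])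
    (α β : F) (hα : α ^ s = 1) (hβ : β ^ t = 1) :
    ((X ^ a₁ * (C α * X + C β) ^ b₁ + X ^ a₂ * (C α * X + C β) ^ b₂ : F[X])
        %ₘ (X ^ q - X)).degree < ((q - 1 : ℕ) : WithBot ℕ) := by
  classical
  have hcard : Fintype.card F = q := by rw [hF, hq]
  have h2 : 2 ≤ q := hcard ▸ Fintype.one_lt_card
  haveI hchar : CharP F 2 := by
    have h0 : ((Fintype.card F : ℕ) : F) = 0 := FiniteField.cast_card_eq_zero F
    have hdvd : ringChar F ∣ 2 ^ ℓ := by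
      rw [← hF]
      exact ringChar.dvd h0
    have hprime : (ringChar F).Prime := CharP.char_is_prime F (ringChar F)
    have hr2 : ringChar F = 2 :=
      (Nat.prime_dvd_prime_iff_eq hprime Nat.prime_two).mp (hprime.dvd_of_dvd_pow hdvd)
    exact hr2 ▸ ringChar.charP F
  set P : F[X] := X ^ a₁ * (C α * X + C β) ^ b₁ + X ^ a₂ * (C α * X + C β) ^ b₂ with hP
  have hmon : (X ^ q - X : F[X]).Monic := by
    apply monic_X_pow_sub
    rw [degree_X]
    exact_mod_cast (by omega : 1 < q)
  have hdegD : (X ^ q - X : F[X]).degree = q := by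
    rw [degree_sub_eq_left_of_degree_lt, degree_X_pow]
    rw [degree_X_pow, degree_X]
    exact_mod_cast (by omega : 1 < q)
  set r : F[X] := P %ₘ (X ^ q - X) with hr
  have hdr : r.degree < (q : WithBot ℕ) := hdegD ▸ degree_modByMonic_lt P hmon
  have hw₁ : q - 1 - a₁ ≤ b₁ := shadow2_le hng₁
  have hw₂ : q - 1 - a₂ ≤ b₂ := shadow2_le hng₂
  -- evaluation of the remainder agrees with the evaluation of P
  have hevalr : ∀ x : F, r.eval x = P.eval x := by
    intro x
    have hx : x ^ q = x := by rw [← hcard]; exact FiniteField.pow_card x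
    rw [hr, modByMonic_eq_sub_mul_div P (X ^ q - X)]
    simp [hx]
  -- the total sum of values of P is zero
  have hsumP : ∑ x : F, P.eval x = 0 := by
    have hPx : ∀ x : F, P.eval x
        = x ^ a₁ * (α * x + β) ^ b₁ + x ^ a₂ * (α * x + β) ^ b₂ := by
      intro x; simp [hP]
    calc ∑ x : F, P.eval x
        = (∑ x : F, x ^ a₁ * (α * x + β) ^ b₁) + ∑ x : F, x ^ a₂ * (α * x + β) ^ b₂ := by
          simp_rw [hPx]
          rw [Finset.sum_add_distrib]
      _ = 0 := by
          rw [sum_line hcard h2 ha₁ hb₁ hab₁ hng₁ α β,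
            sum_line hcard h2 ha₂ hb₂ hab₂ hng₂ α β]
          have hαe : α ^ (q - 1 - a₁) = α ^ (q - 1 - a₂) := by
            have heq : a₁ + (q - 1 - a₁) = a₂ + (q - 1 - a₂) := by omega
            have hcan : (q - 1 - a₁) ≡ (q - 1 - a₂) [MOD s] :=
              Nat.ModEq.add_left_cancel hmod₁ (by rw [heq])
            have hcan' : (q - 1 - a₁) % s = (q - 1 - a₂) % s := hcan
            rw [pow_eq_pow_mod _ hα, hcan', ← pow_eq_pow_mod _ hα]
          have hβe : β ^ (a₁ + b₁ - (q - 1)) = β ^ (a₂ + b₂ - (q - 1)) := by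
            have heq₁ : a₁ + b₁ = (q - 1) + (a₁ + b₁ - (q - 1)) := by omega
            have heq₂ : a₂ + b₂ = (q - 1) + (a₂ + b₂ - (q - 1)) := by omega
            have hcan : (a₁ + b₁ - (q - 1)) ≡ (a₂ + b₂ - (q - 1)) [MOD t] := by
              apply Nat.ModEq.add_left_cancel' (q - 1)
              rw [← heq₁, ← heq₂]
              exact hmod₂
            have hcan' : (a₁ + b₁ - (q - 1)) % t = (a₂ + b₂ - (q - 1)) % t := hcan
            rw [pow_eq_pow_mod _ hβ, hcan', ← pow_eq_pow_mod _ hβ]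
          rw [hαe, hβe, CharTwo.add_self_eq_zero]
  -- conclude via coefficients
  rw [degree_lt_iff_coeff_zero]
  intro m hm
  by_cases hmq : q ≤ m
  · exact (degree_lt_iff_coeff_zero r q).mp hdr m hmq
  · have hmeq : m = q - 1 := by omega
    subst hmeq
    have hrd : r.natDegree < q := by
      by_cases h0 : r = 0
      · rw [h0]; simpa using (by omega : 0 < q)
      · exact (natDegree_lt_iff_degree_lt h0).mpr hdr
    have hS := sum_eval F q hcard h2 hrd
    have hsr : ∑ x : F, r.eval x = 0 := by
      rw [Finset.sum_congr rfl fun x _ => hevalr x]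
      exact hsumP
    rw [hsr] at hS
    exact (neg_eq_zero.mp hS.symm)
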